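/- If μ_−(0, +∞) = 0 and there exists η > 0 such that μ_η(0, +∞) = +∞, then the zero solution of any system governed by the delay inequality D⁺|x(t)| ≤ −a(t)|x(t)| + b(t) sup_{t−τ_max ≤ s ≤ t} |x(s)| is asymptotically stable: every solution x(t) satisfies x(t) → 0 as t → ∞. -/

import Mathlib

open Filter MeasureTheory Set Topology


/-- Upper right Dini derivative `D⁺f(t) = limsup_{h → 0⁺} (f(t+h) - f(t))/h`. -/
noncomputable def DiniUpper (f : ℝ → ℝ) (t : ℝ) : EReal :=
  Filter.limsup (fun h : ℝ => (((f (t + h) - f t) / h : ℝ) : EReal))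
    (nhdsWithin 0 (Set.Ioi 0))

namespace HalanayAux

lemma le_limsup_of_freq {α : Type*} {f : Filter α} {u : α → EReal} {b : EReal}
    (h : ∃ᶠ x in f, b ≤ u x) : b ≤ Filter.limsup u f := by
  rw [Filter.limsup_eq]
  refine le_sInf fun c hc => ?_
  rcases (h.and_eventually hc).exists with ⟨x, h1, h2⟩
  exact h1.trans h2

set_option maxHeartbeats 1600000 in
lemma tendsto_slope_shift {f : ℝ → ℝ} {t d : ℝ} (h : HasDerivAt f d t) :
    Tendsto (fun h' : ℝ => (f (t + h') - f t) / h') (𝓝[>] (0:ℝ)) (𝓝 d) := by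
  have h0 := hasDerivAt_iff_tendsto_slope.1 h
  have hmap : Tendsto (fun h' : ℝ => t + h') (𝓝[>] (0:ℝ)) (𝓝[≠] t) := by
    apply tendsto_nhdsWithin_of_tendsto_nhds_of_eventually_within
    · have : Tendsto (fun h' : ℝ => t + h') (𝓝 (0:ℝ)) (𝓝 (t + 0)) :=
        (continuous_const.add continuous_id).tendsto 0
      simpa using this.mono_left nhdsWithin_le_nhds
    · filter_upwards [self_mem_nhdsWithin] with h' (hh' : 0 < h')
      simp only [mem_compl_iff, mem_singleton_iff]
      intro hc
      nlinarith
  have := h0.comp hmap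
  apply this.congr
  intro h'
  simp [slope_def_field]

lemma diniUpper_eq_of_hasDerivAt {f : ℝ → ℝ} {t d : ℝ} (h : HasDerivAt f d t) :
    DiniUpper f t = (d : EReal) := by
  have h2 : Tendsto (fun h' : ℝ => (((f (t + h') - f t) / h' : ℝ) : EReal)) (𝓝[>] (0:ℝ))
      (𝓝 (d : EReal)) := (continuous_coe_real_ereal.tendsto d).comp (tendsto_slope_shift h)
  exact h2.limsup_eq

set_option maxHeartbeats 1600000 in
lemma master {f B B' : ℝ → ℝ} {s e : ℝ} (hf : Continuous f)
    (hB : ∀ u, HasDerivAt B (B' u) u)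
    (hB'0 : ∀ u ∈ Icc s e, 0 ≤ B' u)
    {N : Set ℝ} (hN : volume N = 0)
    {K₀ K₁ : ℝ} (hK₁ : 0 ≤ K₁)
    (hstart : f s ≤ B s)
    (hgood : ∀ u ∈ Ico s e, u ∉ N → (∀ v ∈ Icc s u, f v ≤ f u) → B u ≤ f u →
       DiniUpper f u ≤ ((B' u : ℝ) : EReal))
    (hbad : ∀ u ∈ Ico s e, (∀ v ∈ Icc s u, f v ≤ f u) → B u ≤ f u →
       DiniUpper f u ≤ ((K₀ + K₁ * f u : ℝ) : EReal)) :
    ∀ u ∈ Icc s e, f u ≤ B u := by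
  intro u hu
  have hse : s ≤ e := le_trans hu.1 hu.2
  have hBcont : Continuous B := by
    rw [continuous_iff_continuousAt]; exact fun v => (hB v).differentiableAt.continuousAt
  have key : ∀ ε : ℝ, 0 < ε → f u ≤ B u + ε * (e - s + 2) := by
    intro ε hε
    set Bm := sSup (B '' Icc s e) with hBmdef
    have hBm : ∀ v ∈ Icc s e, B v ≤ Bm := fun v hv =>
      le_csSup ((isCompact_Icc.image_of_continuousOn hBcont.continuousOn).bddAbove)
        (mem_image_of_mem _ hv)
    set C : ℝ := |K₀| + K₁ * (|Bm| + ε * (e - s) + ε) + 2 with hCdef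
    have hesnn : 0 ≤ e - s := by linarith
    have hC : 0 < C := by positivity
    set δ : ℝ := min (1 / (K₁ * C + 1)) (ε / (C + 1)) with hδdef
    have hδ : 0 < δ := by positivity
    obtain ⟨U, hNU, hUopen, hUvol⟩ :=
      Set.exists_isOpen_lt_of_lt N (ENNReal.ofReal δ) (by
        rw [hN]; exact ENNReal.ofReal_pos.2 hδ)
    set m : ℝ → ℝ := fun v => (volume (U ∩ Ioc s v)).toReal with hmdef
    have hmfin : ∀ v, volume (U ∩ Ioc s v) ≠ ⊤ :=
      fun v => ((measure_mono inter_subset_left).trans_lt (hUvol.trans_le le_top)).ne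
    have hmδ : ∀ v, m v ≤ δ := by
      intro v
      refine ENNReal.toReal_le_of_le_ofReal hδ.le ?_
      exact (measure_mono inter_subset_left).trans hUvol.le
    have hm0 : ∀ v, 0 ≤ m v := fun _ => ENNReal.toReal_nonneg
    have hms : m s = 0 := by
      simp only [hmdef, Ioc_self, inter_empty, measure_empty, ENNReal.toReal_zero]
    have hmmono : Monotone m := by
      intro v v' hvv'
      exact ENNReal.toReal_mono (hmfin v') (measure_mono (inter_subset_inter_right _
        (Ioc_subset_Ioc_right hvv')))
    have hmadd : ∀ v v' : ℝ, s ≤ v → v ≤ v' →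
        m v' = m v + (volume (U ∩ Ioc v v')).toReal := by
      intro v v' hsv hvv'
      have hdisj : Disjoint (U ∩ Ioc s v) (U ∩ Ioc v v') := by
        refine Disjoint.mono inter_subset_right inter_subset_right ?_
        exact Ioc_disjoint_Ioc_of_le le_rfl
      have hunion : U ∩ Ioc s v ∪ U ∩ Ioc v v' = U ∩ Ioc s v' := by
        rw [← inter_union_distrib_left, Ioc_union_Ioc_eq_Ioc hsv hvv']
      have hmeas : MeasurableSet (U ∩ Ioc v v') :=
        (hUopen.measurableSet.inter measurableSet_Ioc)
      have := measure_union (μ := volume) hdisj hmeas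
      rw [hunion] at this
      rw [hmdef]
      simp only
      rw [this, ENNReal.toReal_add (hmfin v) (by
        exact ((measure_mono inter_subset_left).trans_lt (hUvol.trans_le le_top)).ne)]
    have hmlip : ∀ v v' : ℝ, v ≤ v' → m v' - m v ≤ v' - v := by
      intro v v' hvv'
      rcases le_or_gt s v with hsv | hvs
      · rw [hmadd v v' hsv hvv']
        have : (volume (U ∩ Ioc v v')).toReal ≤ v' - v := by
          refine le_trans (ENNReal.toReal_mono (by simp [Real.volume_Ioc]) (measure_mono
            inter_subset_right)) ?_
          rw [Real.volume_Ioc, ENNReal.toReal_ofReal_eq_iff.2]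
          · linarith
        linarith
      · have h1 : m v = 0 := by
          rw [hmdef]; simp only
          rw [Set.Ioc_eq_empty (by linarith : ¬ s < v)]
          simp
        have h2 : m v' ≤ max (v' - s) 0 := by
          refine le_trans (ENNReal.toReal_mono (by simp [Real.volume_Ioc])
            (measure_mono inter_subset_right)) ?_
          rcases le_or_gt 0 (v' - s) with hc | hc
          · rw [Real.volume_Ioc, ENNReal.toReal_ofReal hc]; exact le_max_left _ _
          · rw [Real.volume_Ioc, ENNReal.ofReal_of_nonpos hc.le]; simp
        have : max (v' - s) 0 ≤ v' - v := by
          rcases max_cases (v' - s) 0 with ⟨h, _⟩ | ⟨h, _⟩ <;> rw [h] <;> linarith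
        linarith
    have hmcont : Continuous m := by
      have : LipschitzWith 1 m := by
        refine LipschitzWith.of_dist_le_mul (fun v v' => ?_)
        simp only [NNReal.coe_one, one_mul, Real.dist_eq]
        rcases le_total v v' with h | h
        · rw [abs_of_nonpos (by linarith [hmmono h] : m v - m v' ≤ 0), abs_of_nonpos
            (by linarith : v - v' ≤ 0)]
          have := hmlip v v' h; linarith
        · rw [abs_of_nonneg (by linarith [hmmono h] : 0 ≤ m v - m v'), abs_of_nonneg
            (by linarith : 0 ≤ v - v')]
          have := hmlip v' v h; linarith
      exact this.continuous
    set ψ : ℝ → ℝ := fun v => B v + ε * (v - s) + ε + C * m v with hψdef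
    have hψcont : Continuous ψ := by
      refine ((hBcont.add ((continuous_const.mul (continuous_id.sub continuous_const)))).add
        continuous_const).add (continuous_const.mul hmcont)
    have hψmono : MonotoneOn ψ (Icc s e) := by
      have hBmono : MonotoneOn B (Icc s e) := by
        refine monotoneOn_of_deriv_nonneg (convex_Icc s e) hBcont.continuousOn
          (fun v _ => (hB v).differentiableAt.differentiableWithinAt) ?_
        intro v hv
        rw [(hB v).deriv]
        exact hB'0 v (interior_subset hv)
      intro v hv v' hv' hvv'
      have h1 := hBmono hv hv' hvv'
      have h2 := hmmono hvv'
      simp only [hψdef]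
      nlinarith
    have hψB : ∀ v, ψ v ≤ B v + ε * (e - s) + ε + C * δ → True := fun _ _ => trivial
    -- main claim : f ≤ ψ on [s,e]
    have claim : ∀ v ∈ Icc s e, f v ≤ ψ v := by
      by_contra hcon
      push_neg at hcon
      obtain ⟨u₀, hu₀, hlt₀⟩ := hcon
      set G : Set ℝ := {v ∈ Icc s e | ψ v < f v} with hGdef
      have hGne : G.Nonempty := ⟨u₀, hu₀, hlt₀⟩
      have hGbdd : BddBelow G := ⟨s, fun v hv => hv.1.1⟩
      set w : ℝ := sInf G with hwdef
      have hwlb : ∀ v ∈ G, w ≤ v := fun v hv => csInf_le hGbdd hv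
      have hwIcc : w ∈ Icc s e :=
        ⟨le_csInf hGne (fun v hv => hv.1.1), le_trans (hwlb u₀ ⟨hu₀, hlt₀⟩) hu₀.2⟩
      -- a sequence in G tending to w from (weakly) above
      have hseq : ∀ n : ℕ, ∃ gg ∈ G, gg < w + 1/(n+1 : ℝ) := by
        intro n
        have h1 : w < w + 1/(n+1:ℝ) := by
          have : (0:ℝ) < 1/(n+1:ℝ) := by positivity
          linarith
        exact (csInf_lt_iff hGbdd hGne).1 h1
      choose g hgG hglt using hseq
      have hgw : ∀ n, w ≤ g n := fun n => hwlb _ (hgG n)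
      have hgtend : Tendsto g atTop (𝓝 w) := by
        have h1 : Tendsto (fun n : ℕ => w + 1/(n+1:ℝ)) atTop (𝓝 (w + 0)) :=
          tendsto_const_nhds.add (tendsto_one_div_add_atTop_nhds_zero_nat)
        rw [add_zero] at h1
        exact tendsto_of_tendsto_of_tendsto_of_le_of_le tendsto_const_nhds h1 hgw
          (fun n => (hglt n).le)
      have hψw_le_fw : ψ w ≤ f w := by
        refine le_of_tendsto_of_tendsto' ((hψcont.tendsto w).comp hgtend)
          ((hf.tendsto w).comp hgtend) (fun n => (hgG n).2.le)
      have hsw : s < w := by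
        rcases lt_or_eq_of_le hwIcc.1 with h | h
        · exact h
        · exfalso
          have : ψ s = B s + ε := by simp [hψdef, hms]
          rw [← h] at hψw_le_fw
          rw [this] at hψw_le_fw
          linarith [hstart]
      have hfw_le_ψw : f w ≤ ψ w := by
        set v : ℕ → ℝ := fun n => w - (w - s)/(n+1:ℝ) with hvdef
        have hv1 : ∀ n, v n ∈ Icc s e := by
          intro n
          constructor
          · have h1 : (w - s)/(n+1:ℝ) ≤ w - s := by
              rw [div_le_iff₀ (by positivity)]
              nlinarith [sub_pos.2 hsw]
            simp only [hvdef]; linarith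
          · have h2 : 0 < (w - s)/(n+1:ℝ) := div_pos (by linarith) (by positivity)
            simp only [hvdef]; linarith [hwIcc.2]
        have hv2 : ∀ n, v n < w := by
          intro n
          have h2 : 0 < (w - s)/(n+1:ℝ) := div_pos (by linarith) (by positivity)
          simp only [hvdef]; linarith
        have hv3 : ∀ n, f (v n) ≤ ψ (v n) := by
          intro n
          by_contra hcc
          push_neg at hcc
          exact absurd (hwlb (v n) ⟨hv1 n, hcc⟩) (not_le.2 (hv2 n))
        have hvt : Tendsto v atTop (𝓝 w) := by
          have h1 : Tendsto (fun n : ℕ => (w - s) * (1/(n+1:ℝ))) atTop (𝓝 ((w-s) * 0)) :=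
            tendsto_const_nhds.mul tendsto_one_div_add_atTop_nhds_zero_nat
          rw [mul_zero] at h1
          have : Tendsto (fun n : ℕ => w - (w-s) * (1/(n+1:ℝ))) atTop (𝓝 (w - 0)) :=
            tendsto_const_nhds.sub h1
          rw [sub_zero] at this
          refine this.congr (fun n => ?_)
          simp only [hvdef]; ring
        exact le_of_tendsto_of_tendsto' ((hf.tendsto w).comp hvt)
          ((hψcont.tendsto w).comp hvt) hv3
      have hfψw : f w = ψ w := le_antisymm hfw_le_ψw hψw_le_fw
      have hgww : ∀ n, w < g n := by
        intro n
        rcases lt_or_eq_of_le (hgw n) with h | h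
        · exact h
        · exfalso
          have := (hgG n).2
          rw [← h] at this
          linarith [hfψw]
      have hwe : w < e := by
        rcases lt_or_eq_of_le hwIcc.2 with h | h
        · exact h
        · exfalso
          have h1 := (hgG 0).1.2
          have h2 := hgww 0
          rw [h] at h2
          linarith
      have hwIco : w ∈ Ico s e := ⟨hwIcc.1, hwe⟩
      have hrm : ∀ v ∈ Icc s w, f v ≤ f w := by
        intro v hv
        rcases lt_or_eq_of_le hv.2 with h | h
        · have hvIcc : v ∈ Icc s e := ⟨hv.1, le_trans hv.2 hwIcc.2⟩
          have hnG : f v ≤ ψ v := by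
            by_contra hcc
            push_neg at hcc
            exact absurd (hwlb v ⟨hvIcc, hcc⟩) (not_le.2 h)
          calc f v ≤ ψ v := hnG
            _ ≤ ψ w := hψmono hvIcc hwIcc hv.2
            _ = f w := hfψw.symm
        · rw [h]
      have hBw : B w ≤ f w := by
        rw [hfψw]
        have := hm0 w
        have h1 : 0 ≤ ε * (w - s) := by nlinarith [hwIcc.1]
        simp only [hψdef]
        nlinarith
      -- slope inequalities
      have hslope : ∀ n, (ψ (g n) - ψ w) / (g n - w) < (f (g n) - f w) / (g n - w) := by
        intro n
        have hpos : 0 < g n - w := sub_pos.2 (hgww n)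
        rw [div_lt_div_iff_of_pos_right hpos]
        have := (hgG n).2
        linarith [hfψw]
      have hBslope : Tendsto (fun n => (B (g n) - B w) / (g n - w)) atTop (𝓝 (B' w)) := by
        have h0 := hasDerivAt_iff_tendsto_slope.1 (hB w)
        have hmap : Tendsto g atTop (𝓝[≠] w) := by
          apply tendsto_nhdsWithin_of_tendsto_nhds_of_eventually_within _ hgtend
          exact Eventually.of_forall (fun n => (hgww n).ne')
        have := h0.comp hmap
        refine this.congr (fun n => ?_)
        simp [slope_def_field]
      have hψslope : ∀ n, (ψ (g n) - ψ w) / (g n - w) =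
          (B (g n) - B w) / (g n - w) + ε + C * ((m (g n) - m w) / (g n - w)) := by
        intro n
        have hne : g n - w ≠ 0 := (sub_pos.2 (hgww n)).ne'
        field_simp [hψdef]
        ring
      have hmslope0 : ∀ n, 0 ≤ (m (g n) - m w) / (g n - w) := by
        intro n
        apply div_nonneg _ (sub_pos.2 (hgww n)).le
        linarith [hmmono (hgw n)]
      -- lower bound for DiniUpper f w from a sequence bound
      have hDlow : ∀ c : ℝ, (∀ᶠ n in atTop, c ≤ (f (g n) - f w) / (g n - w)) →
          ((c : ℝ) : EReal) ≤ DiniUpper f w := by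
        intro c hc
        have hh : Tendsto (fun n => g n - w) atTop (𝓝[>] (0:ℝ)) := by
          apply tendsto_nhdsWithin_of_tendsto_nhds_of_eventually_within
          · have := hgtend.sub (tendsto_const_nhds (x := w))
            rw [sub_self] at this
            exact this
          · exact Eventually.of_forall (fun n => sub_pos.2 (hgww n))
        have hfreq : ∃ᶠ h' in 𝓝[>] (0:ℝ),
            ((c : ℝ) : EReal) ≤ (((f (w + h') - f w) / h' : ℝ) : EReal) := by
          refine hh.frequently (Eventually.frequently ?_)
          filter_upwards [hc] with n hn
          have : w + (g n - w) = g n := by ring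
          rw [this]
          exact EReal.coe_le_coe_iff.2 hn
        exact le_limsup_of_freq hfreq
      by_cases hwU : w ∈ U
      · -- bad case: w in U, slope of m is 1
        obtain ⟨h₀, hh₀, hball⟩ := Metric.isOpen_iff.1 hUopen w hwU
        have hmsl : ∀ᶠ n in atTop, (m (g n) - m w) / (g n - w) = 1 := by
          have hev : ∀ᶠ n in atTop, g n - w < h₀ := by
            have := hgtend.sub (tendsto_const_nhds (x := w))
            rw [sub_self] at this
            exact this.eventually (eventually_lt_nhds hh₀)
          filter_upwards [hev] with n hn
          have hsub : Ioc w (g n) ⊆ U := by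
            intro y hy
            apply hball
            rw [Metric.mem_ball, Real.dist_eq, abs_of_pos (by linarith [hy.1] : 0 < y - w)]
            linarith [hy.2]
          have : U ∩ Ioc w (g n) = Ioc w (g n) := inter_eq_self_of_subset_right hsub
          have hadd := hmadd w (g n) hwIcc.1 (hgw n)
          rw [this, Real.volume_Ioc, ENNReal.toReal_ofReal (by linarith [hgww n])] at hadd
          rw [hadd]
          have hne : g n - w ≠ 0 := (sub_pos.2 (hgww n)).ne'
          field_simp
          ring
        have hBev : ∀ᶠ n in atTop, B' w - ε ≤ (B (g n) - B w)/(g n - w) :=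
          hBslope.eventually (eventually_ge_nhds (by linarith : B' w - ε < B' w))
        have hev2 : ∀ᶠ n in atTop, (C : ℝ) ≤ (f (g n) - f w)/(g n - w) := by
          filter_upwards [hmsl, hBev] with n h1 h2
          have h3 := hslope n
          rw [hψslope n, h1] at h3
          have hB'w := hB'0 w hwIcc
          nlinarith
        have hD := hDlow C hev2
        have hval := hbad w hwIco hrm hBw
        have hle : (C : ℝ) ≤ K₀ + K₁ * f w :=
          EReal.coe_le_coe_iff.1 (le_trans hD hval)
        have hψwb : ψ w ≤ Bm + ε * (e - s) + ε + C * δ := by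
          have h1 : B w ≤ Bm := hBm w hwIcc
          have h2 : ε * (w - s) ≤ ε * (e - s) := by nlinarith [hwIcc.2]
          have h3 : C * m w ≤ C * δ := by nlinarith [hmδ w]
          simp only [hψdef]; linarith
        have hKCδ : K₁ * (C * δ) ≤ 1 := by
          have h1 : δ ≤ 1 / (K₁ * C + 1) := min_le_left _ _
          have h2 : 0 < K₁ * C + 1 := by positivity
          have h3 : K₁ * C * δ ≤ K₁ * C * (1 / (K₁ * C + 1)) :=
            mul_le_mul_of_nonneg_left h1 (mul_nonneg hK₁ hC.le)
          have h4 : K₁ * C * (1 / (K₁ * C + 1)) ≤ 1 := by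
            rw [mul_one_div, div_le_one h2]
            linarith
          rw [← mul_assoc]
          exact h3.trans h4
        have hfinal : K₀ + K₁ * f w ≤ C - 1 := by
          have h1 : K₁ * f w ≤ K₁ * (Bm + ε * (e - s) + ε + C * δ) := by
            rw [hfψw]
            exact mul_le_mul_of_nonneg_left hψwb hK₁
          have h2 : K₁ * (Bm + ε * (e - s) + ε + C * δ)
              = K₁ * (Bm + ε * (e - s) + ε) + K₁ * (C * δ) := by ring
          have h3 : K₁ * (Bm + ε * (e - s) + ε) ≤ K₁ * (|Bm| + ε * (e - s) + ε) := by
            have := le_abs_self Bm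
            nlinarith
          have h4 : K₀ ≤ |K₀| := le_abs_self K₀
          rw [hCdef]
          linarith
        linarith
      · have hwN : w ∉ N := fun h => hwU (hNU h)
        have hBev : ∀ᶠ n in atTop, B' w - ε/2 ≤ (B (g n) - B w)/(g n - w) :=
          hBslope.eventually (eventually_ge_nhds (by linarith : B' w - ε/2 < B' w))
        have hev2 : ∀ᶠ n in atTop, B' w + ε/2 ≤ (f (g n) - f w)/(g n - w) := by
          filter_upwards [hBev] with n h2
          have h3 := hslope n
          rw [hψslope n] at h3
          have h5 := hmslope0 n
          nlinarith
        have hD := hDlow _ hev2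
        have hval := hgood w hwIco hwN hrm hBw
        have hle : B' w + ε/2 ≤ B' w :=
          EReal.coe_le_coe_iff.1 (le_trans hD hval)
        linarith
    -- conclude from the claim
    have h1 := claim u hu
    have hCδ : C * δ ≤ ε := by
      have h2 : δ ≤ ε / (C + 1) := min_le_right _ _
      have h3 : C * δ ≤ C * (ε / (C + 1)) := mul_le_mul_of_nonneg_left h2 hC.le
      have h4 : C * (ε / (C + 1)) ≤ ε := by
        rw [mul_div_assoc', div_le_iff₀ (by positivity : (0:ℝ) < C + 1)]
        nlinarith
      exact h3.trans h4
    have h2 : ψ u ≤ B u + ε * (e - s) + ε + C * δ := by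
      have h2a : ε * (u - s) ≤ ε * (e - s) := by nlinarith [hu.2]
      have h2b : C * m u ≤ C * δ := by nlinarith [hmδ u]
      simp only [hψdef]; linarith
    have : f u ≤ B u + ε * (e - s) + ε + ε := by linarith
    linarith [this]
  have hpos : (0:ℝ) < e - s + 2 := by linarith
  refine le_of_forall_pos_le_add (fun ε' hε' => ?_)
  have := key (ε' / (e - s + 2)) (by positivity)
  have heq : ε' / (e - s + 2) * (e - s + 2) = ε' := by field_simp
  linarith [this, heq.le]


lemma clamp_bound {ξ t t₀ τ : ℝ} (hτ : 0 ≤ τ) (hξ : ξ ∈ Icc (t - τ) t) :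
    max (t₀ - τ) (min ξ t₀) ∈ Icc (t₀ - τ) t₀ ∧
      |ξ - max (t₀ - τ) (min ξ t₀)| ≤ |t - t₀| := by
  have h1 := hξ.1
  have h2 := hξ.2
  constructor
  · exact ⟨le_max_left _ _, max_le (by linarith) (min_le_right _ _)⟩
  · rcases le_total ξ t₀ with ha | ha
    · rcases le_total (t₀ - τ) ξ with hb | hb
      · rw [min_eq_left ha, max_eq_right hb]
        simp only [sub_self, abs_zero]
        exact abs_nonneg _
      · rw [min_eq_left ha, max_eq_left hb, abs_of_nonpos (by linarith)]
        calc -(ξ - (t₀ - τ)) = t₀ - τ - ξ := by ring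
          _ ≤ t₀ - t := by linarith
          _ ≤ |t - t₀| := by rw [abs_sub_comm]; exact le_abs_self _
    · rw [min_eq_right ha, max_eq_right (by linarith : t₀ - τ ≤ t₀),
        abs_of_nonneg (by linarith)]
      calc ξ - t₀ ≤ t - t₀ := by linarith
        _ ≤ |t - t₀| := le_abs_self _

lemma P_continuous {V : ℝ → ℝ} {τ : ℝ} (hV : Continuous V) (hτ : 0 ≤ τ) :
    Continuous (fun t => sSup (V '' Icc (t - τ) t)) := by
  rw [Metric.continuous_iff]
  intro t₀ ε hε
  have hUC := isCompact_Icc.uniformContinuousOn_of_continuous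
    (hV.continuousOn (s := Icc (t₀ - τ - 1) (t₀ + 1)))
  rw [Metric.uniformContinuousOn_iff] at hUC
  obtain ⟨δ₀, hδ₀, hUC⟩ := hUC (ε/2) (by linarith)
  refine ⟨min δ₀ 1, by positivity, fun t ht => ?_⟩
  have htd : |t - t₀| < δ₀ := lt_of_lt_of_le (by rw [← Real.dist_eq]; exact ht) (min_le_left _ _)
  have ht1 : |t - t₀| < 1 := lt_of_lt_of_le (by rw [← Real.dist_eq]; exact ht) (min_le_right _ _)
  have habs := abs_lt.1 ht1
  have hKsub : Icc (t - τ) t ⊆ Icc (t₀ - τ - 1) (t₀ + 1) := by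
    intro y hy
    exact ⟨by linarith [hy.1], by linarith [hy.2]⟩
  have hKsub₀ : Icc (t₀ - τ) t₀ ⊆ Icc (t₀ - τ - 1) (t₀ + 1) := by
    intro y hy
    exact ⟨by linarith [hy.1], by linarith [hy.2]⟩
  have hbdd : ∀ r : ℝ, BddAbove (V '' Icc (r - τ) r) := fun r =>
    (isCompact_Icc.image_of_continuousOn hV.continuousOn).bddAbove
  have hne : ∀ r : ℝ, (V '' Icc (r - τ) r).Nonempty := fun r =>
    (nonempty_Icc.2 (by linarith)).image V
  have dir : ∀ t₁ t₂ : ℝ, |t₁ - t₂| < δ₀ → |t₁ - t₂| < 1 →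
      Icc (t₁ - τ) t₁ ⊆ Icc (t₀ - τ - 1) (t₀ + 1) →
      Icc (t₂ - τ) t₂ ⊆ Icc (t₀ - τ - 1) (t₀ + 1) →
      sSup (V '' Icc (t₁ - τ) t₁) ≤ sSup (V '' Icc (t₂ - τ) t₂) + ε/2 := by
    intro t₁ t₂ hd _ hs₁ hs₂
    refine csSup_le (hne t₁) ?_
    rintro y ⟨ξ, hξ, rfl⟩
    obtain ⟨hmem, hdist⟩ := clamp_bound (t₀ := t₂) hτ hξ
    have hd2 : dist ξ (max (t₂ - τ) (min ξ t₂)) < δ₀ := by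
      rw [Real.dist_eq]; exact lt_of_le_of_lt hdist hd
    have := hUC ξ (hs₁ hξ) _ (hs₂ hmem) hd2
    rw [Real.dist_eq] at this
    have h3 : V ξ - V (max (t₂ - τ) (min ξ t₂)) < ε/2 := lt_of_le_of_lt (le_abs_self _) this
    have h4 : V (max (t₂ - τ) (min ξ t₂)) ≤ sSup (V '' Icc (t₂ - τ) t₂) :=
      le_csSup (hbdd t₂) (mem_image_of_mem _ hmem)
    linarith
  have d1 := dir t t₀ htd ht1 hKsub hKsub₀
  have d2 := dir t₀ t (by rw [abs_sub_comm]; exact htd) (by rw [abs_sub_comm]; exact ht1)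
    hKsub₀ hKsub
  rw [Real.dist_eq, abs_lt]
  constructor <;> linarith

end HalanayAux

open HalanayAux in
set_option maxHeartbeats 3200000 in
/-- **Corollary of the generalized Halanay inequality.** If `μ_-(0,∞) = 0` (the set where
`a(t) < |b(t)|` is null) and there is `η > 0` such that `μ_η(0,∞) = ∞` (the set where
`a(t) - |b(t)| > η` has infinite Lebesgue measure), then every solution of
`D⁺|x(t)| ≤ -a(t)|x(t)| + b(t) sup_{t-τ_max ≤ s ≤ t} |x(s)|` tends to zero. -/
theorem generalized_halanay_corollary (Ma Mb τmax : ℝ) (a b : ℝ → ℝ)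
    (hτmax : 0 < τmax)
    (ha : ∀ t ≥ (0 : ℝ), 0 < a t ∧ a t ≤ Ma)
    (hb : ∀ t ≥ (0 : ℝ), |b t| ≤ Mb)
    (hminus : MeasureTheory.volume {t ∈ Set.Ioi (0 : ℝ) | a t < |b t|} = 0)
    (heta : ∃ η > (0 : ℝ), MeasureTheory.volume {t ∈ Set.Ioi (0 : ℝ) | a t - |b t| > η} = ⊤)
    (x φ : ℝ → ℝ) (hxcont : Continuous x)
    (hinit : ∀ s ∈ Set.Icc (-τmax) (0 : ℝ), x s = φ s)
    (hineq : ∀ t ≥ (0 : ℝ), DiniUpper (fun s => |x s|) t ≤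
      ((-(a t) * |x t| + b t * sSup ((fun s => |x s|) '' Set.Icc (t - τmax) t) : ℝ) : EReal)) :
    Filter.Tendsto x Filter.atTop (nhds 0) := by
  obtain ⟨η, hη, hSvol⟩ := heta
  set V : ℝ → ℝ := fun s => |x s| with hVdef
  have hV : Continuous V := hxcont.abs
  have hV0 : ∀ t, 0 ≤ V t := fun t => abs_nonneg _
  set P : ℝ → ℝ := fun t => sSup (V '' Icc (t - τmax) t) with hPdef
  have hineq' : ∀ t, 0 ≤ t → DiniUpper V t ≤ ((-(a t) * V t + b t * P t : ℝ) : EReal) :=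
    fun t ht => hineq t ht
  have hPcont : Continuous P := P_continuous hV hτmax.le
  have hbddP : ∀ t : ℝ, BddAbove (V '' Icc (t - τmax) t) := fun t =>
    (isCompact_Icc.image_of_continuousOn hV.continuousOn).bddAbove
  have hneP : ∀ t : ℝ, (V '' Icc (t - τmax) t).Nonempty := fun t =>
    (nonempty_Icc.2 (by linarith)).image V
  have hle_P : ∀ t ξ : ℝ, ξ ∈ Icc (t - τmax) t → V ξ ≤ P t := fun t ξ hξ =>
    le_csSup (hbddP t) (mem_image_of_mem _ hξ)
  have hVP : ∀ t, V t ≤ P t := fun t => hle_P t t ⟨by linarith, le_refl t⟩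
  have hP0 : ∀ t, 0 ≤ P t := fun t => le_trans (hV0 t) (hVP t)
  have hP_le : ∀ t c : ℝ, (∀ ξ ∈ Icc (t - τmax) t, V ξ ≤ c) → P t ≤ c := by
    intro t c h
    refine csSup_le (hneP t) ?_
    rintro y ⟨ξ, hξ, rfl⟩
    exact h ξ hξ
  have hMa0 : 0 < Ma := lt_of_lt_of_le (ha 0 le_rfl).1 (ha 0 le_rfl).2
  have hMb0 : 0 ≤ Mb := le_trans (abs_nonneg _) (hb 0 le_rfl)
  set N : Set ℝ := {t ∈ Set.Ioi (0:ℝ) | a t < |b t|} ∪ {0} with hNdef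
  have hNnull : volume N = 0 :=
    measure_union_null hminus Real.volume_singleton
  have hab : ∀ t : ℝ, 0 ≤ t → t ∉ N → |b t| ≤ a t := by
    intro t ht htN
    rcases eq_or_lt_of_le ht with h | h
    · exact absurd (Or.inr (by rw [← h]; rfl)) htN
    · by_contra hc
      push_neg at hc
      exact htN (Or.inl ⟨h, hc⟩)
  -- Step 1: V stays below the sliding max, so P is nonincreasing
  have hmono : ∀ t₁ : ℝ, 0 ≤ t₁ → ∀ u, t₁ ≤ u → V u ≤ P t₁ := by
    intro t₁ ht₁ u hu
    have hPle : ∀ v, v ∈ Ico t₁ u → (∀ w ∈ Icc t₁ v, V w ≤ V v) → P t₁ ≤ V v → P v ≤ V v := by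
      intro v hv hrm hBv
      apply hP_le
      intro ξ hξ
      rcases le_total ξ t₁ with h | h
      · exact le_trans (hle_P t₁ ξ ⟨by linarith [hξ.1, hv.1], h⟩) hBv
      · exact hrm ξ ⟨h, hξ.2⟩
    have happ := master (f := V) (B := fun _ => P t₁) (B' := fun _ => 0)
      (s := t₁) (e := u) hV (fun v => hasDerivAt_const v _) (fun v _ => le_rfl) hNnull
      (K₀ := 0) (K₁ := Mb) hMb0 (hVP t₁) ?_ ?_
    · exact happ u ⟨hu, le_rfl⟩
    · intro v hv hvN hrm hBv
      have hv0 : 0 ≤ v := le_trans ht₁ hv.1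
      have hPv : P v ≤ V v := hPle v hv hrm hBv
      have h2 : -(a v) * V v + b v * P v ≤ 0 := by
        have h3 : b v * P v ≤ |b v| * P v := mul_le_mul_of_nonneg_right (le_abs_self _) (hP0 v)
        have h4 : |b v| * P v ≤ a v * P v := mul_le_mul_of_nonneg_right (hab v hv0 hvN) (hP0 v)
        have h5 : a v * P v ≤ a v * V v := mul_le_mul_of_nonneg_left hPv (ha v hv0).1.le
        nlinarith
      exact le_trans (hineq' v hv0) (EReal.coe_le_coe_iff.2 h2)
    · intro v hv hrm hBv
      have hv0 : 0 ≤ v := le_trans ht₁ hv.1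
      have hPv : P v ≤ V v := hPle v hv hrm hBv
      have h2 : -(a v) * V v + b v * P v ≤ 0 + Mb * V v := by
        have h3 : b v * P v ≤ |b v| * P v := mul_le_mul_of_nonneg_right (le_abs_self _) (hP0 v)
        have h4 : |b v| * P v ≤ Mb * P v := mul_le_mul_of_nonneg_right (hb v hv0) (hP0 v)
        have h5 : Mb * P v ≤ Mb * V v := mul_le_mul_of_nonneg_left hPv hMb0
        have h6 : -(a v) * V v ≤ 0 := by nlinarith [(ha v hv0).1.le, hV0 v]
        linarith
      exact le_trans (hineq' v hv0) (EReal.coe_le_coe_iff.2 h2)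
  have hPmono : ∀ t₁ t₂ : ℝ, 0 ≤ t₁ → t₁ ≤ t₂ → P t₂ ≤ P t₁ := by
    intro t₁ t₂ h0 h12
    apply hP_le
    intro ξ hξ
    rcases le_total ξ t₁ with h | h
    · exact hle_P t₁ ξ ⟨by linarith [hξ.1], h⟩
    · exact hmono t₁ h0 ξ h
  -- the limit L of P
  set Q : ℝ → ℝ := fun t => P (max t 0) with hQdef
  have hQanti : Antitone Q := fun u v huv =>
    hPmono (max u 0) (max v 0) (le_max_right _ _) (max_le_max huv le_rfl)
  have hQbdd : BddBelow (Set.range Q) := ⟨0, by rintro y ⟨t, rfl⟩; exact hP0 _⟩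
  have hQtend : Tendsto Q atTop (𝓝 (⨅ t, Q t)) := tendsto_atTop_ciInf hQanti hQbdd
  set L : ℝ := ⨅ t, Q t with hLdef
  have hL0 : 0 ≤ L := le_ciInf fun t => hP0 _
  have hLle : ∀ t, L ≤ Q t := fun t => ciInf_le hQbdd t
  have hLP : ∀ t : ℝ, 0 ≤ t → L ≤ P t := by
    intro t ht
    have := hLle t
    simp only [hQdef] at this
    rwa [max_eq_left ht] at this
  -- main claim : L = 0
  have hLzero : L = 0 := by
    by_contra hLne
    have hLpos : 0 < L := lt_of_le_of_ne hL0 (Ne.symm hLne)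
    set E : ℝ := Real.exp (-(Ma * τmax)) with hEdef
    have hEpos : 0 < E := Real.exp_pos _
    set ε₀ : ℝ := L/2 * E with hε₀def
    have hε₀ : 0 < ε₀ := by positivity
    obtain ⟨T₀, hT₀⟩ := exists_lt_of_ciInf_lt (show ⨅ t, Q t < L + ε₀ by
      rw [← hLdef]; linarith)
    set T : ℝ := max T₀ 0 with hTdef
    have hT0 : 0 ≤ T := le_max_right _ _
    have hPT : P T < L + ε₀ := hT₀
    -- exponential barrier estimate
    have hexp : ∀ s eend Ω : ℝ, 0 ≤ s → s ≤ eend → P s ≤ Ω →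
        ∀ u ∈ Icc s eend, V u ≤ Ω - (Ω - V s) * Real.exp (-(Ma * (u - s))) := by
      intro s eend Ω hs hseend hPsΩ
      have hΩVs : 0 ≤ Ω - V s := by linarith [hVP s]
      have hBd : ∀ u : ℝ, HasDerivAt (fun u : ℝ => Ω - (Ω - V s) * Real.exp (-(Ma * (u - s))))
          (Ma * ((Ω - V s) * Real.exp (-(Ma * (u - s))))) u := by
        intro u
        have h1 : HasDerivAt (fun u : ℝ => -(Ma * (u - s))) (-Ma) u := by
          have := ((hasDerivAt_id u).sub_const s).const_mul (-Ma)
          have e1 : (fun y => -Ma * (id y - s)) = (fun u : ℝ => -(Ma * (u - s))) := by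
            funext y; simp only [id_eq]; ring
          rw [e1, mul_one] at this
          exact this
        have h2 := (Real.hasDerivAt_exp (-(Ma * (u - s)))).comp u h1
        have h3 := (h2.const_mul (Ω - V s)).const_sub Ω
        refine h3.congr_deriv ?_
        ring
      have happ := master (f := V)
        (B := fun u : ℝ => Ω - (Ω - V s) * Real.exp (-(Ma * (u - s))))
        (B' := fun u : ℝ => Ma * ((Ω - V s) * Real.exp (-(Ma * (u - s)))))
        (s := s) (e := eend) hV hBd
        (fun u _ => by positivity) hNnull (K₀ := Mb * P s) (K₁ := 0) le_rfl
        (by simp) ?_ ?_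
      · exact happ
      · intro v hv hvN hrm hBv
        have hv0 : 0 ≤ v := le_trans hs hv.1
        have hPvΩ : P v ≤ Ω := le_trans (hPmono s v hs hv.1) hPsΩ
        have hVvΩ : V v ≤ Ω := le_trans (hVP v) hPvΩ
        have hkey : -(a v) * V v + b v * P v ≤ Ma * ((Ω - V s) * Real.exp (-(Ma * (v - s)))) := by
          have h3 : b v * P v ≤ |b v| * P v := mul_le_mul_of_nonneg_right (le_abs_self _) (hP0 v)
          have h4 : |b v| * P v ≤ a v * P v := mul_le_mul_of_nonneg_right (hab v hv0 hvN) (hP0 v)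
          have h5 : a v * P v ≤ a v * Ω := mul_le_mul_of_nonneg_left hPvΩ (ha v hv0).1.le
          have h6 : a v * (Ω - V v) ≤ Ma * (Ω - V v) :=
            mul_le_mul_of_nonneg_right (ha v hv0).2 (by linarith)
          have h7 : Ma * (Ω - V v) ≤ Ma * (Ω - (Ω - (Ω - V s) * Real.exp (-(Ma * (v - s))))) := by
            apply mul_le_mul_of_nonneg_left _ hMa0.le
            simp only [sub_sub_cancel] at *
            linarith [hBv]
          have h8 : Ω - (Ω - (Ω - V s) * Real.exp (-(Ma * (v - s))))
              = (Ω - V s) * Real.exp (-(Ma * (v - s))) := by ring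
          nlinarith [h7, h8]
        exact le_trans (hineq' v hv0) (EReal.coe_le_coe_iff.2 hkey)
      · intro v hv hrm hBv
        have hv0 : 0 ≤ v := le_trans hs hv.1
        have h2 : -(a v) * V v + b v * P v ≤ Mb * P s + 0 * V v := by
          have h3 : b v * P v ≤ |b v| * P v := mul_le_mul_of_nonneg_right (le_abs_self _) (hP0 v)
          have h4 : |b v| * P v ≤ Mb * P v := mul_le_mul_of_nonneg_right (hb v hv0) (hP0 v)
          have h5 : Mb * P v ≤ Mb * P s := mul_le_mul_of_nonneg_left (hPmono s v hs hv.1) hMb0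
          have h6 : -(a v) * V v ≤ 0 := by nlinarith [(ha v hv0).1.le, hV0 v]
          linarith
        exact le_trans (hineq' v hv0) (EReal.coe_le_coe_iff.2 h2)
    -- no deep dips: V stays above L/2 after T
    have hdeep : ∀ s, T ≤ s → L/2 ≤ V s := by
      intro s hs
      have hs0 : 0 ≤ s := le_trans hT0 hs
      have h1 := hexp s (s + τmax) (P s) hs0 (by linarith) le_rfl
      have h2 : L ≤ P (s + τmax) := hLP _ (by linarith)
      have h3 : P (s + τmax) ≤ P s - (P s - V s) * E := by
        apply hP_le
        intro ξ hξ
        have hξ' : ξ ∈ Icc s (s + τmax) := ⟨by linarith [hξ.1], hξ.2⟩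
        have h4 := h1 ξ hξ'
        have h5 : E ≤ Real.exp (-(Ma * (ξ - s))) := by
          rw [hEdef]
          apply Real.exp_le_exp.2
          nlinarith [hξ'.1, hξ'.2, hMa0]
        have hΩVs : 0 ≤ P s - V s := by linarith [hVP s]
        nlinarith
      have hΩ : P s ≤ P T := hPmono T s hT0 hs
      have h6 : (P s - V s) * E < ε₀ := by linarith
      have h7 : P s - V s < L/2 := by
        rw [hε₀def] at h6
        exact lt_of_mul_lt_mul_right h6 hEpos.le
      have h8 : L ≤ P s := hLP s hs0
      linarith
    -- block decrement estimate
    set E2 : ℝ := Real.exp (2*Ma*τmax) with hE2def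
    have hE2pos : 0 < E2 := Real.exp_pos _
    have hblock : ∀ t, T ≤ t → ∀ u ∈ Icc t (t + τmax),
        P u - V u ≤ (P t - P (t + 2*τmax)) * E2 := by
      intro t hT u hu
      have ht0 : 0 ≤ t := le_trans hT0 hT
      obtain ⟨sm, hsm, hsmin⟩ := isCompact_Icc.exists_isMinOn
        (nonempty_Icc.2 (by linarith : t ≤ t + τmax)) hV.continuousOn
      have hsm0 : 0 ≤ sm := le_trans ht0 hsm.1
      have h1 := hexp sm (t + 2*τmax) (P t) hsm0 (by linarith [hsm.2]) (hPmono t sm ht0 hsm.1)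
      have hVsmPt : V sm ≤ P t := le_trans (hVP sm) (hPmono t sm ht0 hsm.1)
      have h2 : P (t + 2*τmax) ≤ P t - (P t - V sm) * Real.exp (-(2*Ma*τmax)) := by
        apply hP_le
        intro ξ hξ
        have hξ1 : t + τmax ≤ ξ := by linarith [hξ.1]
        have hξ' : ξ ∈ Icc sm (t + 2*τmax) := ⟨by linarith [hsm.2], hξ.2⟩
        have h4 := h1 ξ hξ'
        have h5 : Real.exp (-(2*Ma*τmax)) ≤ Real.exp (-(Ma * (ξ - sm))) := by
          apply Real.exp_le_exp.2
          nlinarith [hξ'.2, hsm.1, hMa0]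
        have hg : 0 ≤ P t - V sm := by linarith
        nlinarith
      -- so (P t - V sm) ≤ (P t - P(t+2τ)) * E2
      have h3 : P t - V sm ≤ (P t - P (t + 2*τmax)) * E2 := by
        have h4 : (P t - V sm) * Real.exp (-(2*Ma*τmax)) ≤ P t - P (t + 2*τmax) := by linarith
        have h5 : Real.exp (-(2*Ma*τmax)) * E2 = 1 := by
          rw [hE2def, ← Real.exp_add]; norm_num
        nlinarith [mul_le_mul_of_nonneg_right h4 hE2pos.le]
      have h6 : P u ≤ P t := hPmono t u ht0 hu.1
      have h7 : V sm ≤ V u := hsmin hu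
      linarith
    -- integral of P - V is uniformly bounded
    have hgcont : Continuous (fun t : ℝ => P t - V t) := hPcont.sub hV
    have hgnn : ∀ t, 0 ≤ P t - V t := fun t => by linarith [hVP t]
    set A : ℝ → ℝ := fun u => ∫ t' in T..u, (P t' - V t') with hAdef
    have hAderiv : ∀ u : ℝ, HasDerivAt A (P u - V u) u := by
      intro u
      exact intervalIntegral.integral_hasDerivAt_right
        (hgcont.intervalIntegrable _ _)
        (hgcont.stronglyMeasurableAtFilter _ _)
        hgcont.continuousAt
    have hAadd : ∀ u v : ℝ, A u + ∫ t' in u..v, (P t' - V t') = A v := by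
      intro u v
      exact intervalIntegral.integral_add_adjacent_intervals
        (hgcont.intervalIntegrable _ _) (hgcont.intervalIntegrable _ _)
    have hAmono : ∀ u v : ℝ, u ≤ v → A u ≤ A v := by
      intro u v huv
      have h1 := hAadd u v
      have h2 : 0 ≤ ∫ t' in u..v, (P t' - V t') :=
        intervalIntegral.integral_nonneg huv (fun t' _ => hgnn t')
      linarith
    set c2 : ℝ := E2 * τmax with hc2def
    have hc2pos : 0 < c2 := by positivity
    set uk : ℕ → ℝ := fun k => T + k * τmax with hukdef
    have huk0 : uk 0 = T := by simp [hukdef]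
    have huksucc : ∀ k : ℕ, uk (k+1) = uk k + τmax := by
      intro k; simp only [hukdef]; push_cast; ring
    have huk2 : ∀ k : ℕ, uk (k+2) = uk k + 2*τmax := by
      intro k; simp only [hukdef]; push_cast; ring
    have hukT : ∀ k : ℕ, T ≤ uk k := by
      intro k
      simp only [hukdef]
      have : (0:ℝ) ≤ (k:ℝ) * τmax := by positivity
      linarith
    have hLuk : ∀ k : ℕ, L ≤ P (uk k) := fun k => hLP _ (le_trans hT0 (hukT k))
    -- the telescoping induction
    have hsum : ∀ k : ℕ, A (uk k) + c2 * (P (uk k) + P (uk (k+1)))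
        ≤ c2 * (P T + P (T + τmax)) := by
      intro k
      induction k with
      | zero =>
        have h1 : A (uk 0) = 0 := by rw [huk0, hAdef]; simp
        rw [h1, huk0]
        have huk1 : uk 1 = T + τmax := by simp only [hukdef]; push_cast; ring
        rw [huk1]
        linarith
      | succ n ih =>
        have hblockint : ∫ t' in (uk n)..(uk (n+1)), (P t' - V t')
            ≤ (P (uk n) - P (uk (n+2))) * E2 * τmax := by
          have h1 : ∀ t' ∈ Icc (uk n) (uk (n+1)), P t' - V t'
              ≤ (P (uk n) - P (uk n + 2*τmax)) * E2 := by
            intro t' ht'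
            apply hblock (uk n) (hukT n) t'
            rw [huksucc n] at ht'
            exact ht'
          have h2 := intervalIntegral.integral_mono_on (μ := volume)
            (by rw [huksucc n]; linarith : uk n ≤ uk (n+1))
            (hgcont.intervalIntegrable _ _)
            (intervalIntegrable_const)
            h1
          rw [intervalIntegral.integral_const, smul_eq_mul] at h2
          rw [huksucc n] at h2 ⊢
          rw [huk2 n]
          calc ∫ t' in (uk n)..(uk n + τmax), (P t' - V t')
              ≤ (uk n + τmax - uk n) * ((P (uk n) - P (uk n + 2*τmax)) * E2) := h2
            _ = (P (uk n) - P (uk n + 2*τmax)) * E2 * τmax := by ring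
        have hA1 : A (uk (n+1)) = A (uk n) + ∫ t' in (uk n)..(uk (n+1)), (P t' - V t') :=
          (hAadd (uk n) (uk (n+1))).symm
        have key : A (uk (n+1)) + c2 * (P (uk (n+1)) + P (uk (n+2)))
            ≤ A (uk n) + c2 * (P (uk n) + P (uk (n+1))) := by
          rw [hA1, hc2def]
          nlinarith [hblockint]
        linarith
    have hAboundk : ∀ k : ℕ, A (uk k) ≤ c2 * 2 * ε₀ := by
      intro k
      have h1 := hsum k
      have h2 : L ≤ P (uk k) := hLuk k
      have h3 : L ≤ P (uk (k+1)) := hLuk (k+1)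
      have h4 : P (T + τmax) ≤ P T := hPmono T (T + τmax) hT0 (by linarith)
      nlinarith [hPT, hc2pos]
    have hAbound : ∀ u : ℝ, A u ≤ c2 * 2 * ε₀ := by
      intro u
      obtain ⟨k, hk⟩ := exists_nat_ge ((u - T) / τmax)
      have hk2 : u ≤ uk k := by
        rw [div_le_iff₀ hτmax] at hk
        simp only [hukdef]
        linarith
      exact le_trans (hAmono u (uk k) hk2) (hAboundk k)
    -- the perturbed function W = V - Ma * A is nonincreasing on [T, ∞)
    have hWanti : ∀ u1 u2 : ℝ, T ≤ u1 → u1 ≤ u2 →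
        V u2 - Ma * A u2 ≤ V u1 - Ma * A u1 := by
      intro u1 u2 hu1 hu12
      have hu10 : 0 ≤ u1 := le_trans hT0 hu1
      have hBd : ∀ u : ℝ, HasDerivAt (fun u : ℝ => (V u1 - Ma * A u1) + Ma * A u)
          (Ma * (P u - V u)) u := fun u => ((hAderiv u).const_mul Ma).const_add _
      have happ := master (f := V) (B := fun u : ℝ => (V u1 - Ma * A u1) + Ma * A u)
        (B' := fun u : ℝ => Ma * (P u - V u)) (s := u1) (e := u2) hV hBd
        (fun u _ => mul_nonneg hMa0.le (hgnn u)) hNnull (K₀ := Mb * P T) (K₁ := 0) le_rfl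
        (by simp) ?_ ?_
      · have h9 : V u2 ≤ (V u1 - Ma * A u1) + Ma * A u2 := happ u2 ⟨hu12, le_rfl⟩
        linarith
      · intro v hv hvN hrm hBv
        have hv0 : 0 ≤ v := le_trans hu10 hv.1
        have hkey : -(a v) * V v + b v * P v ≤ Ma * (P v - V v) := by
          have h3 : b v * P v ≤ |b v| * P v := mul_le_mul_of_nonneg_right (le_abs_self _) (hP0 v)
          have h4 : |b v| * P v ≤ a v * P v := mul_le_mul_of_nonneg_right (hab v hv0 hvN) (hP0 v)
          have h5 : a v * (P v - V v) ≤ Ma * (P v - V v) :=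
            mul_le_mul_of_nonneg_right (ha v hv0).2 (hgnn v)
          nlinarith
        exact le_trans (hineq' v hv0) (EReal.coe_le_coe_iff.2 hkey)
      · intro v hv hrm hBv
        have hv0 : 0 ≤ v := le_trans hu10 hv.1
        have h2 : -(a v) * V v + b v * P v ≤ Mb * P T + 0 * V v := by
          have h3 : b v * P v ≤ |b v| * P v := mul_le_mul_of_nonneg_right (le_abs_self _) (hP0 v)
          have h4 : |b v| * P v ≤ Mb * P v := mul_le_mul_of_nonneg_right (hb v hv0) (hP0 v)
          have h5 : Mb * P v ≤ Mb * P T := mul_le_mul_of_nonneg_left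
            (hPmono T v hT0 (le_trans hu1 (le_trans hv.1 (le_refl v)))) hMb0
          have h6 : -(a v) * V v ≤ 0 := by nlinarith [(ha v hv0).1.le, hV0 v]
          linarith
        exact le_trans (hineq' v hv0) (EReal.coe_le_coe_iff.2 h2)
    -- the monotone (increasing) function F
    set F : ℝ → ℝ := fun u => Ma * A (max u T) - V (max u T) with hFdef
    have hFmono : Monotone F := by
      intro u v huv
      have h := hWanti (max u T) (max v T) (le_max_right _ _) (max_le_max huv le_rfl)
      simp only [hFdef]
      linarith
    have hFcont : Continuous F := by
      have h1 : Continuous (fun u : ℝ => max u T) := continuous_id.max continuous_const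
      have hAcont : Continuous A := by
        rw [continuous_iff_continuousAt]
        exact fun u => (hAderiv u).differentiableAt.continuousAt
      exact (continuous_const.mul (hAcont.comp h1)).sub (hV.comp h1)
    set SF : StieltjesFunction ℝ :=
      { toFun := F
        mono' := hFmono
        right_continuous' := fun z => (hFcont.continuousAt).continuousWithinAt } with hSFdef
    -- F is bounded
    have hFbddabove : ∀ u, F u ≤ Ma * (c2 * 2 * ε₀) := by
      intro u
      simp only [hFdef]
      have h1 : A (max u T) ≤ c2 * 2 * ε₀ := hAbound _
      have h2 : 0 ≤ V (max u T) := hV0 _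
      nlinarith [hMa0]
    have hFtop : Tendsto F atTop (𝓝 (⨆ u, F u)) :=
      tendsto_atTop_ciSup hFmono ⟨Ma * (c2 * 2 * ε₀), by rintro y ⟨t, rfl⟩; exact hFbddabove t⟩
    have hFbot : Tendsto F atBot (𝓝 (F T)) := by
      have hev : ∀ᶠ u in atBot, F u = F T := by
        filter_upwards [Iic_mem_atBot T] with u (hu : u ≤ T)
        simp only [hFdef, max_eq_right hu, max_self]
      exact Tendsto.congr' (hev.mono fun u hu => hu.symm) tendsto_const_nhds
    have hSFuniv : SF.measure univ = ENNReal.ofReal ((⨆ u, F u) - F T) :=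
      SF.measure_univ hFbot hFtop
    -- the contradiction via the Radon-Nikodym derivative
    set q : ℝ := η * L / 2 with hqdef
    have hqpos : 0 < q := by positivity
    set ρ := SF.measure.rnDeriv volume with hρdef
    set Dm : Set ℝ := {u : ℝ | ENNReal.ofReal q ≤ ρ u} with hDmdef
    have hDmmeas : MeasurableSet Dm :=
      measurableSet_le measurable_const (Measure.measurable_rnDeriv _ _)
    have hcheb : ENNReal.ofReal q * volume Dm ≤ SF.measure univ := by
      calc ENNReal.ofReal q * volume Dm = ∫⁻ _ in Dm, ENNReal.ofReal q ∂volume := by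
            rw [MeasureTheory.setLIntegral_const, mul_comm]
        _ ≤ ∫⁻ u in Dm, ρ u ∂volume := by
            apply setLIntegral_mono (Measure.measurable_rnDeriv _ _)
            intro u hu
            exact hu
        _ = (volume.withDensity ρ) Dm := (withDensity_apply ρ hDmmeas).symm
        _ ≤ SF.measure Dm := by
            exact (Measure.withDensity_rnDeriv_le SF.measure volume) Dm
        _ ≤ SF.measure univ := measure_mono (subset_univ _)
    have hDmfin : volume Dm ≠ ⊤ := by
      intro hcon
      rw [hcon, ENNReal.mul_top (by simp [ENNReal.ofReal_eq_zero]; linarith), hSFuniv] at hcheb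
      exact (ENNReal.ofReal_ne_top) (top_le_iff.1 hcheb)
    -- a.e. differentiability
    have hae := SF.ae_hasDerivAt
    set S' : Set ℝ := {t ∈ Set.Ioi (0:ℝ) | a t - |b t| > η} with hS'def
    have hsub : S' ∩ Ioi T ⊆ Dm ∪ {u | ¬ HasDerivAt SF (ρ u).toReal u} := by
      intro u ⟨huS, huT⟩
      by_cases hder : HasDerivAt SF (ρ u).toReal u
      · left
        have hu0 : 0 ≤ u := le_trans hT0 (le_of_lt huT)
        -- identify the derivative of V at u
        have hFeq : F =ᶠ[𝓝 u] fun v => Ma * A v - V v := by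
          filter_upwards [Ioi_mem_nhds huT] with v (hv : T < v)
          simp only [hFdef, max_eq_left hv.le]
        have hder2 : HasDerivAt (fun v => Ma * A v - V v) ((ρ u).toReal) u :=
          hder.congr_of_eventuallyEq hFeq.symm
        have hder3 : HasDerivAt V (Ma * (P u - V u) - (ρ u).toReal) u := by
          have h1 := ((hAderiv u).const_mul Ma).sub hder2
          have h2 : ((fun y => Ma * A y) - fun v => Ma * A v - V v) = V := by
            funext v; simp only [Pi.sub_apply]; ring
          rw [h2] at h1
          exact h1
        have hDval : DiniUpper V u = ((Ma * (P u - V u) - (ρ u).toReal : ℝ) : EReal) :=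
          diniUpper_eq_of_hasDerivAt hder3
        have hbound : -(a u) * V u + b u * P u ≤ -q + Ma * (P u - V u) := by
          have hSu1 : η < a u - |b u| := huS.2
          have hVu : L/2 ≤ V u := hdeep u huT.le
          have h3 : b u * P u ≤ |b u| * P u := mul_le_mul_of_nonneg_right (le_abs_self _) (hP0 u)
          have h4 : |b u| * (P u - V u) ≤ Ma * (P u - V u) := by
            apply mul_le_mul_of_nonneg_right _ (hgnn u)
            have := (ha u hu0).2
            linarith
          have h5 : -(a u - |b u|) * V u ≤ -η * V u := by
            nlinarith [hV0 u]
          have h6 : -η * V u ≤ -q := by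
            rw [hqdef]
            nlinarith
          nlinarith
        have hfinal : -q + Ma * (P u - V u) ≥ Ma * (P u - V u) - (ρ u).toReal := by
          have := hineq' u hu0
          rw [hDval] at this
          have h2 := EReal.coe_le_coe_iff.1 this
          linarith
        have hq_le : q ≤ (ρ u).toReal := by linarith
        exact ENNReal.ofReal_le_of_le_toReal hq_le
      · right
        exact hder
    have hS'big : volume (S' ∩ Ioi T) = ⊤ := by
      have h1 : S' ⊆ (S' ∩ Ioc 0 T) ∪ (S' ∩ Ioi T) := by
        intro t ht
        rcases le_or_gt t T with h | h
        · exact Or.inl ⟨ht, ht.1, h⟩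
        · exact Or.inr ⟨ht, h⟩
      have h2 := (measure_mono (μ := volume) h1).trans (measure_union_le (μ := volume) _ _)
      rw [hS'def] at h2 ⊢
      rw [hSvol] at h2
      by_contra hcon
      have h3 : volume ({t ∈ Set.Ioi (0:ℝ) | a t - |b t| > η} ∩ Ioc 0 T) ≤ ENNReal.ofReal T :=
        le_trans (measure_mono inter_subset_right) (by rw [Real.volume_Ioc]; simp)
      have h4 : volume ({t ∈ Set.Ioi (0:ℝ) | a t - |b t| > η} ∩ Ioi T) < ⊤ :=
        lt_top_iff_ne_top.2 hcon
      have h5 := lt_of_le_of_lt h2 (ENNReal.add_lt_top.2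
        ⟨lt_of_le_of_lt h3 ENNReal.ofReal_lt_top, h4⟩)
      exact (lt_irrefl _ h5).elim
    have hS'small : volume (S' ∩ Ioi T) ≤ volume Dm := by
      calc volume (S' ∩ Ioi T) ≤ volume (Dm ∪ {u | ¬ HasDerivAt SF (ρ u).toReal u}) :=
            measure_mono hsub
        _ ≤ volume Dm + volume {u | ¬ HasDerivAt SF (ρ u).toReal u} := measure_union_le _ _
        _ = volume Dm := by
            have h0 : volume {u | ¬ HasDerivAt SF (ρ u).toReal u} = 0 := ae_iff.1 hae
            rw [h0, add_zero]
    rw [hS'big] at hS'small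
    exact hDmfin (top_le_iff.1 hS'small)
  -- conclude : V → 0 hence x → 0
  have hQ0 : Tendsto Q atTop (𝓝 0) := by
    rw [← hLzero]
    exact hQtend
  have hxbound : ∀ᶠ t in atTop, x t ≤ Q t ∧ -Q t ≤ x t := by
    filter_upwards [Ici_mem_atTop (0:ℝ)] with t (ht : 0 ≤ t)
    have h1 : V t ≤ Q t := by
      simp only [hQdef]
      rw [max_eq_left ht]
      exact hVP t
    constructor
    · exact le_trans (le_abs_self _) h1
    · have := neg_abs_le (x t)
      have h2 : -Q t ≤ -V t := by simpa using neg_le_neg h1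
      exact le_trans h2 this
  have hQneg : Tendsto (fun t => -Q t) atTop (𝓝 0) := by
    have := hQ0.neg
    simpa using this
  exact tendsto_of_tendsto_of_tendsto_of_le_of_le' hQneg hQ0
    (by filter_upwards [hxbound] with t ht; exact ht.2)
    (by filter_upwards [hxbound] with t ht; exact ht.1)
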